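/- Let A be an integral domain, P ∈ A[Y] monic of degree n ≥ 1, and let p, q be positive integers whose images in A are invertible and such that pq divides n. Then √[q]{√[p]{P}} = √[pq]{P}. -/

import Mathlib

open Polynomial Finset

/-- Geometric sum of two monic polynomials of degree `d` has coefficient `m` at `(m-1)*d`
and natDegree at most `(m-1)*d`. -/
private lemma geom_facts {A : Type*} [CommRing A] (U V : Polynomial A) (m d : ℕ)
    (hU : U.Monic) (hV : V.Monic) (hUd : U.natDegree = d) (hVd : V.natDegree = d) :
    (∑ i ∈ range m, U ^ i * V ^ (m - 1 - i)).natDegree ≤ (m - 1) * d ∧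
    (∑ i ∈ range m, U ^ i * V ^ (m - 1 - i)).coeff ((m - 1) * d) = (m : A) := by
  have hterm : ∀ i ∈ range m, (U ^ i * V ^ (m - 1 - i)).Monic ∧
      (U ^ i * V ^ (m - 1 - i)).natDegree = (m - 1) * d := by
    intro i hi
    rw [mem_range] at hi
    have hmon : (U ^ i * V ^ (m - 1 - i)).Monic := (hU.pow i).mul (hV.pow _)
    refine ⟨hmon, ?_⟩
    rw [(hU.pow i).natDegree_mul (hV.pow _), hU.natDegree_pow, hV.natDegree_pow, hUd, hVd,
      ← Nat.add_mul]
    congr 1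
    omega
  constructor
  · exact natDegree_sum_le_of_forall_le _ _ fun i hi => (hterm i hi).2.le
  · rw [finset_sum_coeff]
    have : ∀ i ∈ range m, (U ^ i * V ^ (m - 1 - i)).coeff ((m - 1) * d) = 1 := by
      intro i hi
      have h := hterm i hi
      rw [← h.2]
      exact h.1.coeff_natDegree
    rw [Finset.sum_congr rfl this, Finset.sum_const, card_range, nsmul_eq_mul, mul_one]

/-- Degree bound: `deg (U^m - V^m) < k + (m-1)*d` when `deg (U - V) < k`. -/
private lemma pow_sub_pow_degree_lt {A : Type*} [CommRing A] (U V : Polynomial A) (m d k : ℕ)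
    (hU : U.Monic) (hV : V.Monic) (hUd : U.natDegree = d) (hVd : V.natDegree = d)
    (h : (U - V).degree < (k : WithBot ℕ)) :
    (U ^ m - V ^ m).degree < ((k + (m - 1) * d : ℕ) : WithBot ℕ) := by
  rw [← geom_sum₂_mul U V m]
  rcases eq_or_ne (U - V) 0 with h0 | h0
  · rw [h0, mul_zero, degree_zero]
    exact WithBot.bot_lt_coe _
  · calc ((∑ i ∈ range m, U ^ i * V ^ (m - 1 - i)) * (U - V)).degree
        ≤ (∑ i ∈ range m, U ^ i * V ^ (m - 1 - i)).degree + (U - V).degree := degree_mul_le _ _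
      _ < ((k + (m - 1) * d : ℕ) : WithBot ℕ) := by
          have h1 : (∑ i ∈ range m, U ^ i * V ^ (m - 1 - i)).degree ≤ (((m - 1) * d : ℕ) : WithBot ℕ) :=
            degree_le_of_natDegree_le (geom_facts U V m d hU hV hUd hVd).1
          rw [degree_eq_natDegree h0] at h ⊢
          have h2 : (U - V).natDegree < k := by exact_mod_cast h
          calc (∑ i ∈ range m, U ^ i * V ^ (m - 1 - i)).degree + ((U - V).natDegree : WithBot ℕ)
              ≤ (((m - 1) * d : ℕ) : WithBot ℕ) + ((U - V).natDegree : WithBot ℕ) :=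
                add_le_add h1 le_rfl
            _ = (((m - 1) * d + (U - V).natDegree : ℕ) : WithBot ℕ) := by push_cast; ring
            _ < ((k + (m - 1) * d : ℕ) : WithBot ℕ) := by
                exact_mod_cast (by omega : (m - 1) * d + (U - V).natDegree < k + (m - 1) * d)

/-- Uniqueness: two monic polynomials of degree `d` whose `m`-th powers agree up to degree
`(m-1)*d` are equal, provided `m` is invertible. -/
private lemma unique_aux {A : Type*} [CommRing A] [IsDomain A] (U V : Polynomial A) (m d : ℕ)
    (hU : U.Monic) (hV : V.Monic) (hUd : U.natDegree = d) (hVd : V.natDegree = d)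
    (hmu : IsUnit (m : A))
    (h : (U ^ m - V ^ m).degree < (((m - 1) * d : ℕ) : WithBot ℕ)) : U = V := by
  by_contra hne
  have h0 : U - V ≠ 0 := sub_ne_zero_of_ne hne
  obtain ⟨hle, hcoeff⟩ := geom_facts U V m d hU hV hUd hVd
  set G := ∑ i ∈ range m, U ^ i * V ^ (m - 1 - i) with hG
  have hmne : (m : A) ≠ 0 := hmu.ne_zero
  have hGdeg : G.natDegree = (m - 1) * d :=
    le_antisymm hle (le_natDegree_of_ne_zero (by rw [hcoeff]; exact hmne))
  have hGne : G ≠ 0 := fun h' => hmne (by rw [← hcoeff, h', Polynomial.coeff_zero])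
  have key : (U ^ m - V ^ m).degree = (U - V).degree + G.degree := by
    rw [← geom_sum₂_mul U V m, ← hG, degree_mul, add_comm]
  rw [key, degree_eq_natDegree h0, degree_eq_natDegree hGne, hGdeg] at h
  have : ((U - V).natDegree + (m - 1) * d : ℕ) < ((m - 1) * d : ℕ) := by exact_mod_cast h
  omega

def IsApproxRoot {A : Type*} [CommRing A] (P Q : Polynomial A) (p : ℕ) : Prop :=
  Q.Monic ∧ Q.natDegree = P.natDegree / p ∧
    (P - Q ^ p).degree < ((P.natDegree - P.natDegree / p : ℕ) : WithBot ℕ)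

theorem stmt_2 {A : Type*} [CommRing A] [IsDomain A] (P : Polynomial A) (n p q : ℕ)
    (hP : P.Monic) (hdeg : P.natDegree = n) (hn : 1 ≤ n) (hp : 0 < p) (hq : 0 < q)
    (hinvp : IsUnit (p : A)) (hinvq : IsUnit (q : A)) (hdvd : p * q ∣ n) :
    ∀ Q R S : Polynomial A, IsApproxRoot P Q p → IsApproxRoot Q R q →
      IsApproxRoot P S (p * q) → R = S := by
  intro Q R S ⟨hQm, hQd, hQlt⟩ ⟨hRm, hRd, hRlt⟩ ⟨hSm, hSd, hSlt⟩
  obtain ⟨d, hd⟩ := hdvd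
  have hnp : n / p = q * d := by rw [hd, mul_assoc, Nat.mul_div_cancel_left _ hp]
  have hnpq : n / (p * q) = d := by rw [hd, Nat.mul_div_cancel_left _ (Nat.mul_pos hp hq)]
  rw [hdeg] at hQd hQlt hSd hSlt
  rw [hnp] at hQd hQlt
  rw [hnpq] at hSd hSlt
  rw [hQd] at hRd hRlt
  have hd1 : 1 ≤ d := Nat.pos_of_ne_zero (by rintro rfl; simp at hd; omega)
  have hRdeg : R.natDegree = d := by rw [hRd, Nat.mul_div_cancel_left _ hq]
  rw [Nat.mul_div_cancel_left _ hq] at hRlt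
  -- R is an approximate (p*q)-th root of P
  have hRq : (R ^ q).Monic := hRm.pow q
  have hRqd : (R ^ q).natDegree = q * d := by rw [hRm.natDegree_pow, hRdeg]
  have key1 : (Q ^ p - (R ^ q) ^ p).degree < (((q * d - d) + (p - 1) * (q * d) : ℕ) : WithBot ℕ) :=
    pow_sub_pow_degree_lt Q (R ^ q) p (q * d) (q * d - d) hQm hRq hQd hRqd hRlt
  have harith : (q * d - d) + (p - 1) * (q * d) = n - d := by
    have h1 : (p - 1) * (q * d) = p * (q * d) - q * d := by rw [Nat.sub_one_mul]
    have h2 : p * (q * d) = n := by rw [← mul_assoc, ← hd]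
    have h3 : d ≤ q * d := Nat.le_mul_of_pos_left d hq
    have h4 : q * d ≤ n := by rw [← h2]; exact Nat.le_mul_of_pos_left _ hp
    omega
  rw [harith] at key1
  have key2 : (P - R ^ (p * q)).degree < ((n - d : ℕ) : WithBot ℕ) := by
    have heq : P - R ^ (p * q) = (P - Q ^ p) + (Q ^ p - (R ^ q) ^ p) := by
      rw [← pow_mul, mul_comm q p]; ring
    rw [heq]
    refine lt_of_le_of_lt (degree_add_le _ _) (max_lt ?_ key1)
    refine lt_of_lt_of_le hQlt (WithBot.coe_le_coe.mpr (Nat.cast_le.mpr ?_))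
    have h3 : d ≤ q * d := Nat.le_mul_of_pos_left d hq
    omega
  -- compare with S
  have key3 : (R ^ (p * q) - S ^ (p * q)).degree < (((p * q - 1) * d : ℕ) : WithBot ℕ) := by
    have harith2 : (p * q - 1) * d = n - d := by
      have : (p * q - 1) * d = p * q * d - d := by rw [Nat.sub_one_mul]
      have h3 : d ≤ p * q * d := Nat.le_mul_of_pos_left d (Nat.mul_pos hp hq)
      omega
    rw [harith2]
    have heq : R ^ (p * q) - S ^ (p * q) = (P - S ^ (p * q)) - (P - R ^ (p * q)) := by ring
    rw [heq]
    exact lt_of_le_of_lt (degree_sub_le _ _) (max_lt hSlt key2)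
  exact unique_aux R S (p * q) d hRm hSm hRdeg hSd
    (by push_cast; exact hinvp.mul hinvq) key3
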